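/- Fix n ≥ 1 and u ∈ ℝ, and define the polynomial function F : ℂ^n × ℂ^n → ℂ by F(a,q) = ∑_{k=1}^{n} (−a − 2∑_{s=1}^{n−1} e^{−isu} A(a)^s a)_k · q_k. Then for every a, q ∈ ℂ^n and every 1 ≤ k ≤ n, the complex partial derivative satisfies −∂F/∂a_k (a,q) = q_k + 2∑_{s=1}^{n−1} e^{−isu}(s+1)((A(a)ᵀ)^s q)_k. (That is, the adjoint system q̇ = (E + 2∑_{s=1}^{n−1} e^{−isu}(s+1)(A(a)ᵀ)^s)q coincides with the Hamiltonian equation q̇ = −∂F/∂a.) -/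

import Mathlib

open Complex Metric

/-- The lower-triangular nilpotent Toeplitz matrix `A(a)` with `A(a)_{j,k} = a_{j-k}`
(1-indexed) for `j > k` and `0` otherwise. -/
noncomputable def toeplitzA {n : ℕ} (a : Fin n → ℂ) : Matrix (Fin n) (Fin n) ℂ :=
  Matrix.of fun j k =>
    if _ : (k : ℕ) < (j : ℕ) then a ⟨(j : ℕ) - (k : ℕ) - 1, by have := j.isLt; omega⟩ else 0


lemma toeplitzA_mulVec_symm {n : ℕ} (a b : Fin n → ℂ) :
    (toeplitzA a).mulVec b = (toeplitzA b).mulVec a := by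
  ext i
  simp only [Matrix.mulVec, dotProduct, toeplitzA, Matrix.of_apply]
  have hlt : ∀ x : Fin n, (x:ℕ) < (i:ℕ) → (i:ℕ) - (x:ℕ) - 1 < n := fun x hx => by
    have := i.isLt; omega
  set σ : Fin n → Fin n := fun x =>
    if h : (x:ℕ) < (i:ℕ) then ⟨(i:ℕ)-(x:ℕ)-1, hlt x h⟩ else x with hσ
  have hσσ : ∀ x, σ (σ x) = x := by
    intro x
    by_cases h : (x:ℕ) < (i:ℕ)
    · simp only [σ, dif_pos h]
      have h2 : (i:ℕ) - (x:ℕ) - 1 < (i:ℕ) := by omega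
      simp only [dif_pos h2]
      apply Fin.ext; simp; try omega
    · simp only [σ, dif_neg h]
  refine Finset.sum_nbij' σ σ ?_ ?_ ?_ ?_ ?_
  · intro x _; exact Finset.mem_univ _
  · intro x _; exact Finset.mem_univ _
  · intro x _; exact hσσ x
  · intro x _; exact hσσ x
  · intro x _
    by_cases h : (x:ℕ) < (i:ℕ)
    · have h2 : (i:ℕ) - (x:ℕ) - 1 < (i:ℕ) := by omega
      simp only [σ, dif_pos h, dif_pos h2]
      rw [mul_comm]
      congr 1
      apply congrArg; apply Fin.ext; simp; omega
    · simp only [σ, dif_neg h]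
      simp [dif_neg h]

lemma toeplitzA_comm {n : ℕ} (a b : Fin n → ℂ) :
    toeplitzA a * toeplitzA b = toeplitzA b * toeplitzA a := by
  ext i j
  simp only [Matrix.mul_apply, toeplitzA, Matrix.of_apply]
  have hlt : ∀ x : Fin n, (j:ℕ) < (x:ℕ) → (x:ℕ) < (i:ℕ) → (i:ℕ)+(j:ℕ)-(x:ℕ) < n := by
    have := i.isLt; omega
  set σ : Fin n → Fin n := fun x =>
    if h : (j:ℕ) < (x:ℕ) ∧ (x:ℕ) < (i:ℕ) then ⟨(i:ℕ)+(j:ℕ)-(x:ℕ), hlt x h.1 h.2⟩ else x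
    with hσ
  have hσσ : ∀ x, σ (σ x) = x := by
    intro x
    by_cases h : (j:ℕ) < (x:ℕ) ∧ (x:ℕ) < (i:ℕ)
    · simp only [σ, dif_pos h]
      have h2 : (j:ℕ) < (i:ℕ)+(j:ℕ)-(x:ℕ) ∧ (i:ℕ)+(j:ℕ)-(x:ℕ) < (i:ℕ) := by omega
      simp only [dif_pos h2]
      apply Fin.ext; simp; omega
    · simp only [σ, dif_neg h]
  refine Finset.sum_nbij' σ σ ?_ ?_ ?_ ?_ ?_
  · intro x _; exact Finset.mem_univ _
  · intro x _; exact Finset.mem_univ _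
  · intro x _; exact hσσ x
  · intro x _; exact hσσ x
  · intro x _
    by_cases h : (j:ℕ) < (x:ℕ) ∧ (x:ℕ) < (i:ℕ)
    · have h2 : (j:ℕ) < (i:ℕ)+(j:ℕ)-(x:ℕ) ∧ (i:ℕ)+(j:ℕ)-(x:ℕ) < (i:ℕ) := by omega
      simp only [σ, dif_pos h, dif_pos h.1, dif_pos h.2, dif_pos h2.1, dif_pos h2.2]
      rw [mul_comm]
      congr 1 <;> apply congrArg <;> apply Fin.ext <;> simp <;> omega
    · simp only [σ, dif_neg h]
      rcases not_and_or.mp h with h1 | h1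
      · rw [dif_neg h1, dif_neg h1, mul_zero, mul_zero]
      · rw [dif_neg h1, dif_neg h1, zero_mul, zero_mul]

noncomputable def Dmat {n : ℕ} (A N : Matrix (Fin n) (Fin n) ℂ) : ℕ → Matrix (Fin n) (Fin n) ℂ
  | 0 => 0
  | (s+1) => N * A ^ s + A * Dmat A N s

lemma hasDerivAt_pow_entry {n : ℕ} (A N : Matrix (Fin n) (Fin n) ℂ) (z₀ : ℂ)
    (s : ℕ) (i j : Fin n) :
    HasDerivAt (fun z => ((A + (z - z₀) • N) ^ s) i j) ((Dmat A N s) i j) z₀ := by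
  induction s generalizing i j with
  | zero => simpa [Dmat] using hasDerivAt_const z₀ ((1 : Matrix (Fin n) (Fin n) ℂ) i j)
  | succ s ih =>
    have hentry : ∀ (i l : Fin n),
        HasDerivAt (fun z => (A + (z - z₀) • N) i l) (N i l) z₀ := by
      intro i l
      have h1 : HasDerivAt (fun z : ℂ => A i l + (z - z₀) * N i l) (1 * N i l) z₀ :=
        (((hasDerivAt_id z₀).sub_const z₀).mul_const (N i l)).const_add (A i l)
      simpa using h1
    have key : HasDerivAt (fun z => ∑ l, (A + (z - z₀) • N) i l * ((A + (z - z₀) • N) ^ s) l j)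
        (∑ l, (N i l * (A ^ s) l j + A i l * (Dmat A N s) l j)) z₀ := by
      apply HasDerivAt.fun_sum
      intro l _
      have := (hentry i l).fun_mul (ih l j)
      simpa using this
    have heq : (fun z => ((A + (z - z₀) • N) ^ (s+1)) i j)
        = fun z => ∑ l, (A + (z - z₀) • N) i l * ((A + (z - z₀) • N) ^ s) l j := by
      funext z; rw [pow_succ', Matrix.mul_apply]
    rw [heq]
    convert key using 1
    simp [Dmat, Matrix.add_apply, Matrix.mul_apply, Finset.sum_add_distrib]

lemma Dmat_mulVec {n : ℕ} (A N : Matrix (Fin n) (Fin n) ℂ) (hc : A * N = N * A)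
    (a e : Fin n → ℂ) (h : N.mulVec a = A.mulVec e) (s : ℕ) :
    (Dmat A N s).mulVec a = ((s : ℂ)) • ((A ^ s).mulVec e) := by
  induction s with
  | zero => simp [Dmat]
  | succ s ih =>
    have hcomm : N * A ^ s = A ^ s * N := by
      exact ((Commute.symm hc).pow_right s)
    rw [Dmat, Matrix.add_mulVec, hcomm, ← Matrix.mulVec_mulVec, ← Matrix.mulVec_mulVec,
      h, ih, Matrix.mulVec_smul, Matrix.mulVec_mulVec, Matrix.mulVec_mulVec,
      ← pow_succ, ← pow_succ']
    push_cast
    rw [add_smul, one_smul, add_comm]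

lemma toeplitzA_update {n : ℕ} (a : Fin n → ℂ) (k : Fin n) (z : ℂ) :
    toeplitzA (Function.update a k z) =
      toeplitzA a + (z - a k) • toeplitzA (Pi.single k 1) := by
  ext i j
  simp only [toeplitzA, Matrix.of_apply, Matrix.add_apply, Matrix.smul_apply, smul_eq_mul]
  split_ifs with h
  · simp only [Function.update_apply, Pi.single_apply]
    split_ifs with h2 <;> simp [h2] <;> ring
  · simp

/-- The complex Hamiltonian `F(a,q) = ∑_{k=1}^n (-a - 2∑_{s=1}^{n-1} e^{-isu} A(a)^s a)_k q_k`. -/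
noncomputable def hamF (n : ℕ) (u : ℝ) (a q : Fin n → ℂ) : ℂ :=
  ∑ k : Fin n, (-(a k) - 2 * ∑ s ∈ Finset.Icc 1 (n - 1),
      Complex.exp (-(s : ℂ) * (u : ℂ) * Complex.I) * ((toeplitzA a ^ s).mulVec a) k) * q k

/-- the adjoint system is Hamiltonian:
`-∂F/∂a_k (a,q) = q_k + 2∑_{s=1}^{n-1} e^{-isu}(s+1)((A(a)ᵀ)^s q)_k`. -/
theorem adjoint_is_hamiltonian
    (n : ℕ) (hn : 1 ≤ n) (u : ℝ) (a q : Fin n → ℂ) (k : Fin n) :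
    -(deriv (fun z => hamF n u (Function.update a k z) q) (a k))
      = q k + 2 * ∑ s ∈ Finset.Icc 1 (n - 1),
          Complex.exp (-(s : ℂ) * (u : ℂ) * Complex.I) * ((s : ℂ) + 1) *
            (((toeplitzA a).transpose ^ s).mulVec q) k := by
  classical
  have hNa : (toeplitzA (Pi.single k 1)).mulVec a
      = (toeplitzA a).mulVec (Pi.single k 1) := toeplitzA_mulVec_symm _ _
  have hAN : toeplitzA a * toeplitzA (Pi.single k 1)
      = toeplitzA (Pi.single k 1) * toeplitzA a := toeplitzA_comm _ _
  have hupd : ∀ l : Fin n,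
      HasDerivAt (fun z => Function.update a k z l) ((Pi.single k 1 : Fin n → ℂ) l) (a k) := by
    intro l
    rcases eq_or_ne l k with rfl | hl
    · simpa [Function.update_apply] using hasDerivAt_id' (a l)
    · simpa [Function.update_apply, hl, Pi.single_apply] using hasDerivAt_const (a k) (a l)
  have hms : ∀ (s : ℕ) (k' : Fin n),
      HasDerivAt (fun z =>
          (((toeplitzA a + (z - a k) • toeplitzA (Pi.single k 1)) ^ s).mulVec
            (Function.update a k z)) k')
        (((Dmat (toeplitzA a) (toeplitzA (Pi.single k 1)) s).mulVec a) k'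
          + ((toeplitzA a ^ s).mulVec (Pi.single k 1)) k') (a k) := by
    intro s k'
    have h1 : ∀ l : Fin n, HasDerivAt (fun z =>
          ((toeplitzA a + (z - a k) • toeplitzA (Pi.single k 1)) ^ s) k' l
            * Function.update a k z l)
        ((Dmat (toeplitzA a) (toeplitzA (Pi.single k 1)) s) k' l * a l
          + (toeplitzA a ^ s) k' l * (Pi.single k 1 : Fin n → ℂ) l) (a k) := by
      intro l
      have h2 := (hasDerivAt_pow_entry (toeplitzA a) (toeplitzA (Pi.single k 1)) (a k) s k' l).fun_mul
        (hupd l)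
      have e1 : Function.update a k (a k) l = a l := by
        rcases eq_or_ne l k with rfl | hl
        · simp
        · simp [Function.update_apply, hl]
      rw [e1] at h2
      simpa using h2
    have hsum := HasDerivAt.fun_sum (fun l (_ : l ∈ Finset.univ) => h1 l)
    convert hsum using 1
    · rfl
    · rfl
    · funext z; simp [Matrix.mulVec, dotProduct]
    simp [Matrix.mulVec, dotProduct, Finset.sum_add_distrib]
  have hF : HasDerivAt (fun z => ∑ k' : Fin n,
        (-(Function.update a k z k') - 2 * ∑ s ∈ Finset.Icc 1 (n - 1),
          Complex.exp (-(s : ℂ) * (u : ℂ) * Complex.I) *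
            (((toeplitzA a + (z - a k) • toeplitzA (Pi.single k 1)) ^ s).mulVec
              (Function.update a k z)) k') * q k')
      (∑ k' : Fin n,
        (-((Pi.single k 1 : Fin n → ℂ) k') - 2 * ∑ s ∈ Finset.Icc 1 (n - 1),
          Complex.exp (-(s : ℂ) * (u : ℂ) * Complex.I) *
            (((Dmat (toeplitzA a) (toeplitzA (Pi.single k 1)) s).mulVec a) k'
              + ((toeplitzA a ^ s).mulVec (Pi.single k 1)) k')) * q k') (a k) := by
    apply HasDerivAt.fun_sum
    intro k' _
    apply HasDerivAt.mul_const
    apply HasDerivAt.sub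
    · exact (hupd k').neg
    · apply HasDerivAt.const_mul
      apply HasDerivAt.fun_sum
      intro s _
      exact (hms s k').const_mul _
  have hfun : (fun z => hamF n u (Function.update a k z) q)
      = (fun z => ∑ k' : Fin n,
        (-(Function.update a k z k') - 2 * ∑ s ∈ Finset.Icc 1 (n - 1),
          Complex.exp (-(s : ℂ) * (u : ℂ) * Complex.I) *
            (((toeplitzA a + (z - a k) • toeplitzA (Pi.single k 1)) ^ s).mulVec
              (Function.update a k z)) k') * q k') := by
    funext z
    simp only [hamF, toeplitzA_update]
  rw [hfun, hF.deriv]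
  -- now pure algebra
  have hDm := Dmat_mulVec (toeplitzA a) (toeplitzA (Pi.single k 1)) hAN a (Pi.single k 1) hNa
  have hXe : ∀ s : ℕ, ∀ k' : Fin n,
      ((toeplitzA a ^ s).mulVec (Pi.single k 1)) k' = (toeplitzA a ^ s) k' k := by
    intro s k'
    simp [Matrix.mulVec, dotProduct, Pi.single_apply]
  have hT : ∀ s : ℕ, (((toeplitzA a).transpose ^ s).mulVec q) k
      = ∑ k' : Fin n, (toeplitzA a ^ s) k' k * q k' := by
    intro s
    rw [← Matrix.transpose_pow]
    simp [Matrix.mulVec, dotProduct, Matrix.transpose_apply]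
  simp only [hDm, hXe, hT, Pi.smul_apply, smul_eq_mul]
  rw [← Finset.sum_neg_distrib]
  have key : ∀ k' : Fin n,
      -((-((Pi.single k 1 : Fin n → ℂ) k') - 2 * ∑ s ∈ Finset.Icc 1 (n - 1),
          Complex.exp (-(s : ℂ) * (u : ℂ) * Complex.I) *
            ((s : ℂ) * (toeplitzA a ^ s) k' k + (toeplitzA a ^ s) k' k)) * q k')
      = (Pi.single k 1 : Fin n → ℂ) k' * q k'
        + ∑ s ∈ Finset.Icc 1 (n - 1),
            2 * (Complex.exp (-(s : ℂ) * (u : ℂ) * Complex.I) * (((s : ℂ) + 1) *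
              ((toeplitzA a ^ s) k' k * q k'))) := by
    intro k'
    have h0 : ∀ (e S qq : ℂ), -((-e - 2*S)*qq) = e*qq + (2*S)*qq := by intros; ring
    rw [h0, Finset.mul_sum, Finset.sum_mul]
    congr 1
    apply Finset.sum_congr rfl
    intro s _
    ring
  rw [Finset.sum_congr rfl fun k' _ => key k', Finset.sum_add_distrib, Finset.sum_comm]
  congr 1
  · simp [Pi.single_apply]
  · rw [Finset.mul_sum]
    apply Finset.sum_congr rfl
    intro s _
    simp only [Finset.mul_sum]
    apply Finset.sum_congr rfl
    intro k' _
    ring
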